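/- Let C be a binary linear code of length n = 2^m - 1, minimum distance d = 6, and locality r = 2 (every coordinate lies in the support of a weight-3 dual codeword). If m is even and m > 8, then the dimension k of C satisfies k ≤ (2/3)(2^m - 1) - m, even without assuming disjoint repair groups. -/

import Mathlib

open Finset Submodule Module

set_option linter.unusedSectionVars false

namespace LRC

variable {ι : Type*} [Fintype ι] [DecidableEq ι]

def vsupp (z : ι → ZMod 2) : Finset ι := Finset.univ.filter (fun j => z j ≠ 0)

lemma mem_vsupp {z : ι → ZMod 2} {j : ι} : j ∈ vsupp z ↔ z j ≠ 0 := by simp [vsupp]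

lemma hammingNorm_eq (z : ι → ZMod 2) : hammingNorm z = (vsupp z).card := rfl

def SS (Z : Finset (ι → ZMod 2)) : Finset ι := Z.biUnion vsupp

lemma mem_SS {Z : Finset (ι → ZMod 2)} {j : ι} :
    j ∈ SS Z ↔ ∃ z ∈ Z, z j ≠ 0 := by simp [SS, mem_vsupp]

lemma vsupp_subset_SS {Z : Finset (ι → ZMod 2)} {z : ι → ZMod 2} (hz : z ∈ Z) :
    vsupp z ⊆ SS Z := fun j hj => mem_SS.2 ⟨z, hz, mem_vsupp.1 hj⟩

lemma SS_mono {Z Z' : Finset (ι → ZMod 2)} (h : Z ⊆ Z') : SS Z ⊆ SS Z' := by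
  intro j hj; rcases mem_SS.1 hj with ⟨z, hz, h0⟩; exact mem_SS.2 ⟨z, h hz, h0⟩

lemma span_vanish {Z : Finset (ι → ZMod 2)} {x : ι → ZMod 2}
    (hx : x ∈ span (ZMod 2) (Z : Set (ι → ZMod 2))) {j : ι} (hj : j ∉ SS Z) : x j = 0 := by
  induction hx using Submodule.span_induction with
  | mem z hz => by_contra h; exact hj (mem_SS.2 ⟨z, hz, h⟩)
  | zero => rfl
  | add u v _ _ hu hv => simp [hu, hv]
  | smul a u _ hu => simp [hu]

/-- overlap relation within `Z` -/
def R (Z : Finset (ι → ZMod 2)) (u v : ι → ZMod 2) : Prop :=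
  u ∈ Z ∧ v ∈ Z ∧ (vsupp u ∩ vsupp v).Nonempty

lemma path_step {Z G : Finset (ι → ZMod 2)} (hGZ : G ⊆ Z) {z1 w : ι → ZMod 2}
    (hz1G : z1 ∈ G) (h : Relation.ReflTransGen (R Z) z1 w) :
    vsupp w ⊆ SS G ∨ ∃ w' ∈ Z, ¬ vsupp w' ⊆ SS G ∧ (vsupp w' ∩ SS G).Nonempty := by
  induction h with
  | refl => exact Or.inl (vsupp_subset_SS hz1G)
  | @tail b c hbc hstep ih =>
    rcases ih with hb | hex
    · rcases hstep with ⟨hbZ, hcZ, j, hj⟩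
      by_cases hc : vsupp c ⊆ SS G
      · exact Or.inl hc
      · refine Or.inr ⟨c, hcZ, hc, ⟨j, ?_⟩⟩
        rw [mem_inter] at hj ⊢
        exact ⟨hj.2, hb hj.1⟩
    · exact Or.inr hex

lemma grow (Z : Finset (ι → ZMod 2)) (h3 : ∀ z ∈ Z, (vsupp z).card = 3)
    (z1 : ι → ZMod 2) (hz1 : z1 ∈ Z)
    (hconn : ∀ z ∈ Z, Relation.ReflTransGen (R Z) z1 z) :
    ∀ (d : ℕ) (G : Finset (ι → ZMod 2)), z1 ∈ G → G ⊆ Z → Z.card - G.card ≤ d →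
      (SS G).card ≤ 2 * G.card + 1 →
      LinearIndependent (ZMod 2) ((↑) : ↥(G : Set (ι → ZMod 2)) → (ι → ZMod 2)) →
      ∃ G', z1 ∈ G' ∧ G' ⊆ Z ∧ SS G' = SS Z ∧ (SS G').card ≤ 2 * G'.card + 1 ∧
        LinearIndependent (ZMod 2) ((↑) : ↥(G' : Set (ι → ZMod 2)) → (ι → ZMod 2)) := by
  intro d
  induction d with
  | zero =>
    intro G hz1G hGZ hcard hSS hLI
    have hGZ' : G = Z := Finset.eq_of_subset_of_card_le hGZ (by omega)
    exact ⟨G, hz1G, hGZ, by rw [hGZ'], hSS, hLI⟩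
  | succ d ih =>
    intro G hz1G hGZ hcard hSS hLI
    by_cases hSSeq : SS G = SS Z
    · exact ⟨G, hz1G, hGZ, hSSeq, hSS, hLI⟩
    · -- find a new element
      have hsub : SS G ⊆ SS Z := SS_mono hGZ
      have : ∃ u, u ∈ SS Z ∧ u ∉ SS G := by
        by_contra h
        push_neg at h
        exact hSSeq (Finset.Subset.antisymm hsub h)
      obtain ⟨u, huZ, huG⟩ := this
      obtain ⟨w, hwZ, hw0⟩ := mem_SS.1 huZ
      have hpath := path_step hGZ hz1G (hconn w hwZ)
      have hwns : ¬ vsupp w ⊆ SS G := fun hs => huG (hs (mem_vsupp.2 hw0))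
      rcases hpath with hcase | ⟨w', hw'Z, hw'ns, hw'ov⟩
      · exact absurd hcase hwns
      · -- insert w'
        obtain ⟨u', hu'⟩ : ∃ u', u' ∈ vsupp w' ∧ u' ∉ SS G := by
          by_contra h; push_neg at h; exact hw'ns h
        have hw'G : w' ∉ G := fun h => hu'.2 (vsupp_subset_SS h hu'.1)
        have hw'span : w' ∉ span (ZMod 2) (G : Set (ι → ZMod 2)) := fun h =>
          (mem_vsupp.1 hu'.1) (span_vanish h hu'.2)
        have hLI' : LinearIndependent (ZMod 2)
            ((↑) : ↥((insert w' G : Finset (ι → ZMod 2)) : Set (ι → ZMod 2)) → (ι → ZMod 2)) := by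
          rw [Finset.coe_insert]
          exact linearIndependent_subtype_iff.2 ((linearIndependent_subtype_iff.1 hLI).id_insert hw'span)
        have hcard' : (insert w' G).card = G.card + 1 := Finset.card_insert_of_notMem hw'G
        have hSS' : SS (insert w' G) = vsupp w' ∪ SS G := by
          simp [SS, Finset.biUnion_insert]
        have hSScard : (SS (insert w' G)).card ≤ 2 * (insert w' G).card + 1 := by
          rw [hSS', hcard']
          obtain ⟨j, hj⟩ := hw'ov
          rw [mem_inter] at hj
          have h1 : vsupp w' ∪ SS G = SS G ∪ (vsupp w' \ SS G) := by
            rw [Finset.union_comm, Finset.union_sdiff_self_eq_union]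
          have h2 : (vsupp w' \ SS G) ⊆ (vsupp w').erase j :=
            fun x hx => Finset.mem_erase.2 ⟨fun he => (Finset.mem_sdiff.1 hx).2 (he ▸ hj.2),
              (Finset.mem_sdiff.1 hx).1⟩
          have h3' : (vsupp w' \ SS G).card ≤ 2 := by
            calc (vsupp w' \ SS G).card ≤ ((vsupp w').erase j).card := Finset.card_le_card h2
            _ = (vsupp w').card - 1 := Finset.card_erase_of_mem hj.1
            _ = 2 := by rw [h3 w' hw'Z]
          calc (vsupp w' ∪ SS G).card = (SS G ∪ (vsupp w' \ SS G)).card := by rw [h1]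
          _ ≤ (SS G).card + (vsupp w' \ SS G).card := Finset.card_union_le _ _
          _ ≤ 2 * G.card + 1 + 2 := by omega
          _ = 2 * (G.card + 1) + 1 := by ring
        have hd' : Z.card - (insert w' G).card ≤ d := by
          have : G.card < Z.card := Finset.card_lt_card ⟨hGZ, fun hc => hw'G (hc hw'Z)⟩
          omega
        exact ih (insert w' G) (Finset.mem_insert_of_mem hz1G)
          (Finset.insert_subset hw'Z hGZ) hd' hSScard hLI'

lemma greedy (Z : Finset (ι → ZMod 2)) (h3 : ∀ z ∈ Z, (vsupp z).card = 3)
    (z1 : ι → ZMod 2) (hz1 : z1 ∈ Z)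
    (hconn : ∀ z ∈ Z, Relation.ReflTransGen (R Z) z1 z) :
    ∃ t : ℕ, t ≤ finrank (ZMod 2) (span (ZMod 2) (Z : Set (ι → ZMod 2))) ∧
      (SS Z).card ≤ 2 * t + 1 ∧
      (∀ z2 ∈ Z, vsupp z2 ≠ vsupp z1 → 2 ≤ t) := by
  have hz1ne : z1 ≠ 0 := by
    intro h
    have := h3 z1 hz1
    rw [h] at this
    simp [vsupp] at this
  have hbase : LinearIndependent (ZMod 2)
      ((↑) : ↥(({z1} : Finset (ι → ZMod 2)) : Set (ι → ZMod 2)) → (ι → ZMod 2)) := by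
    rw [Finset.coe_singleton]
    exact linearIndependent_subtype_iff.2 (LinearIndepOn.singleton (v := id) hz1ne)
  have hSS1 : SS {z1} = vsupp z1 := by simp [SS]
  obtain ⟨G, hz1G, hGZ, hSSeq, hSScard, hLI⟩ := grow Z h3 z1 hz1 hconn Z.card {z1}
    (Finset.mem_singleton_self z1) (Finset.singleton_subset_iff.2 hz1)
    (by omega) (by rw [hSS1, Finset.card_singleton, h3 z1 hz1]) hbase
  refine ⟨G.card, ?_, by rw [← hSSeq]; exact hSScard, ?_⟩
  · rw [← finrank_span_finset_eq_card (R := ZMod 2) hLI]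
    exact Submodule.finrank_mono (Submodule.span_mono (Finset.coe_subset.2 hGZ))
  · intro z2 hz2 hne
    by_contra h
    push_neg at h
    have hG1 : G = {z1} := by
      have := Finset.card_le_one.1 (by omega : G.card ≤ 1)
      ext x
      simp only [Finset.mem_singleton]
      constructor
      · intro hx; exact this x hx z1 hz1G
      · intro hx; rw [hx]; exact hz1G
    rw [hG1, hSS1] at hSSeq
    have hsub : vsupp z2 ⊆ vsupp z1 := hSSeq ▸ vsupp_subset_SS hz2
    exact hne (Finset.eq_of_subset_of_card_le hsub (by rw [h3 z1 hz1, h3 z2 hz2]))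

section ML
variable {ι : Type*} [Fintype ι] [DecidableEq ι]

def NN (Z : Finset (ι → ZMod 2)) (i : ι) : Finset ι :=
  (Z.filter (fun z => z i ≠ 0)).biUnion vsupp

lemma mem_NN {Z : Finset (ι → ZMod 2)} {i j : ι} :
    j ∈ NN Z i ↔ ∃ z ∈ Z, z i ≠ 0 ∧ z j ≠ 0 := by
  simp [NN, mem_vsupp, and_assoc]

def plain (Z : Finset (ι → ZMod 2)) (i : ι) : Prop :=
  i ∈ SS Z ∧ (NN Z i).card = 3 ∧ ∀ j ∈ NN Z i, NN Z j = NN Z i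

instance (Z : Finset (ι → ZMod 2)) : DecidablePred (plain Z) := fun i => by
  unfold plain; exact inferInstance

def plains (Z : Finset (ι → ZMod 2)) : Finset ι := Finset.univ.filter (plain Z)

lemma plains_subset_SS (Z : Finset (ι → ZMod 2)) : plains Z ⊆ SS Z := by
  intro i hi
  exact ((Finset.mem_filter.1 hi).2).1

lemma span_mem_SS {Z : Finset (ι → ZMod 2)} {x : ι → ZMod 2}
    (hx : x ∈ span (ZMod 2) (Z : Set (ι → ZMod 2))) {j : ι} (hj : x j ≠ 0) : j ∈ SS Z := by
  by_contra h; exact hj (span_vanish hx h)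

lemma rank_split {K Z' : Finset (ι → ZMod 2)} (hdisj : Disjoint (SS K) (SS Z')) :
    finrank (ZMod 2) (span (ZMod 2) (K : Set (ι → ZMod 2)))
      + finrank (ZMod 2) (span (ZMod 2) (Z' : Set (ι → ZMod 2)))
      ≤ finrank (ZMod 2) (span (ZMod 2) ((K ∪ Z' : Finset (ι → ZMod 2)) : Set (ι → ZMod 2))) := by
  have hinf : span (ZMod 2) (K : Set (ι → ZMod 2)) ⊓ span (ZMod 2) (Z' : Set (ι → ZMod 2)) = ⊥ := by
    rw [Submodule.eq_bot_iff]
    intro x hx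
    funext j
    by_contra hj
    exact (Finset.disjoint_left.1 hdisj) (span_mem_SS hx.1 hj) (span_mem_SS hx.2 hj)
  have hsup := Submodule.finrank_sup_add_finrank_inf_eq
    (span (ZMod 2) (K : Set (ι → ZMod 2))) (span (ZMod 2) (Z' : Set (ι → ZMod 2)))
  rw [hinf, finrank_bot, add_zero] at hsup
  rw [Finset.coe_union, Submodule.span_union]
  omega

lemma NN_congr {K Z : Finset (ι → ZMod 2)} (hKZ : K ⊆ Z)
    (hdisj : Disjoint (SS K) (SS (Z \ K))) {i : ι} (hi : i ∈ SS (Z \ K)) :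
    NN Z i = NN (Z \ K) i := by
  have : Z.filter (fun z => z i ≠ 0) = (Z \ K).filter (fun z => z i ≠ 0) := by
    ext z
    simp only [Finset.mem_filter, Finset.mem_sdiff]
    constructor
    · rintro ⟨hzZ, hzi⟩
      refine ⟨⟨hzZ, fun hzK => ?_⟩, hzi⟩
      exact (Finset.disjoint_left.1 hdisj) (mem_SS.2 ⟨z, hzK, hzi⟩) hi
    · rintro ⟨⟨hzZ, _⟩, hzi⟩; exact ⟨hzZ, hzi⟩
  rw [NN, NN, this]

lemma plain_transfer {K Z : Finset (ι → ZMod 2)} (hKZ : K ⊆ Z)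
    (hdisj : Disjoint (SS K) (SS (Z \ K))) {i : ι} (hi : plain (Z \ K) i) :
    plain Z i := by
  obtain ⟨hiSS, hcard, hall⟩ := hi
  have hNN := NN_congr hKZ hdisj hiSS
  refine ⟨SS_mono (Finset.sdiff_subset) hiSS, by rw [hNN]; exact hcard, ?_⟩
  intro j hj
  rw [hNN] at hj
  have hjSS : j ∈ SS (Z \ K) := by
    obtain ⟨z, hz, _, hzj⟩ := mem_NN.1 hj
    exact mem_SS.2 ⟨z, hz, hzj⟩
  rw [hNN, NN_congr hKZ hdisj hjSS]
  exact hall j hj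

lemma ML (Z : Finset (ι → ZMod 2)) (h3 : ∀ z ∈ Z, (vsupp z).card = 3) :
    ∃ a b : ℕ,
      a + b ≤ finrank (ZMod 2) (span (ZMod 2) (Z : Set (ι → ZMod 2))) ∧
      2 * (SS Z).card ≤ 6 * a + 5 * b ∧
      3 * a ≤ (plains Z).card := by
  classical
  induction Z using Finset.strongInduction with
  | _ Z ih =>
  rcases Z.eq_empty_or_nonempty with rfl | ⟨z1, hz1⟩
  · exact ⟨0, 0, by simp [SS]⟩
  · -- component of z1
    set K := Z.filter (fun z => Relation.ReflTransGen (R Z) z1 z) with hK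
    have hKZ : K ⊆ Z := Finset.filter_subset _ _
    have hz1K : z1 ∈ K := Finset.mem_filter.2 ⟨hz1, Relation.ReflTransGen.refl⟩
    have hKcomp : ∀ z ∈ K, ∀ z' ∈ Z, (vsupp z ∩ vsupp z').Nonempty → z' ∈ K := by
      intro z hz z' hz' hov
      obtain ⟨hzZ, hconnz⟩ := Finset.mem_filter.1 hz
      exact Finset.mem_filter.2 ⟨hz', hconnz.tail ⟨hzZ, hz', hov⟩⟩
    set Z' := Z \ K with hZ'
    have hZsplit : K ∪ Z' = Z := Finset.union_sdiff_of_subset hKZ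
    have hdisj : Disjoint (SS K) (SS Z') := by
      rw [Finset.disjoint_left]
      intro j hjK hjZ'
      obtain ⟨z, hzK, hzj⟩ := mem_SS.1 hjK
      obtain ⟨z', hz'Z', hz'j⟩ := mem_SS.1 hjZ'
      have : z' ∈ K := hKcomp z hzK z' (Finset.mem_sdiff.1 hz'Z').1
        ⟨j, Finset.mem_inter.2 ⟨mem_vsupp.2 hzj, mem_vsupp.2 hz'j⟩⟩
      exact (Finset.mem_sdiff.1 hz'Z').2 this
    have hZ'sub : Z' ⊂ Z := Finset.sdiff_ssubset hKZ ⟨z1, hz1K⟩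
    obtain ⟨a', b', hrank', hcount', hplain'⟩ := ih Z' hZ'sub
      (fun z hz => h3 z ((Finset.mem_sdiff.1 hz).1))
    have hSSunion : SS Z = SS K ∪ SS Z' := by
      rw [← hZsplit]
      ext j
      simp only [SS, Finset.mem_biUnion, Finset.mem_union]
      constructor
      · rintro ⟨z, hz | hz, hjz⟩
        · exact Or.inl ⟨z, hz, hjz⟩
        · exact Or.inr ⟨z, hz, hjz⟩
      · rintro (⟨z, hz, hjz⟩ | ⟨z, hz, hjz⟩)
        · exact ⟨z, Or.inl hz, hjz⟩
        · exact ⟨z, Or.inr hz, hjz⟩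
    have hSScard : (SS Z).card = (SS K).card + (SS Z').card := by
      rw [hSSunion, Finset.card_union_of_disjoint hdisj]
    have hranksplit := rank_split hdisj
    rw [hZsplit] at hranksplit
    have h3K : ∀ z ∈ K, (vsupp z).card = 3 := fun z hz => h3 z (hKZ hz)
    -- plains Z' transfer
    have hplainT : plains Z' ⊆ plains Z := by
      intro i hi
      obtain ⟨_, hp⟩ := Finset.mem_filter.1 hi
      exact Finset.mem_filter.2 ⟨Finset.mem_univ i, plain_transfer hKZ hdisj hp⟩
    by_cases hall : ∀ z ∈ K, vsupp z = vsupp z1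
    · -- isolated triple component
      have hSSK : SS K = vsupp z1 := by
        apply Finset.Subset.antisymm
        · intro j hj
          obtain ⟨z, hzK, hzj⟩ := mem_SS.1 hj
          rw [← hall z hzK]; exact mem_vsupp.2 hzj
        · exact (hall z1 hz1K) ▸ vsupp_subset_SS hz1K
      have hNi : ∀ i ∈ vsupp z1, NN Z i = vsupp z1 := by
        intro i hi
        apply Finset.Subset.antisymm
        · intro j hj
          obtain ⟨z, hzZ, hzi, hzj⟩ := mem_NN.1 hj
          have hzK : z ∈ K := hKcomp z1 hz1K z hzZ
            ⟨i, Finset.mem_inter.2 ⟨hi, mem_vsupp.2 hzi⟩⟩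
          rw [← hall z hzK]; exact mem_vsupp.2 hzj
        · intro j hj
          exact mem_NN.2 ⟨z1, hz1, mem_vsupp.1 hi, mem_vsupp.1 hj⟩
      have hplainK : ∀ i ∈ vsupp z1, plain Z i := by
        intro i hi
        refine ⟨mem_SS.2 ⟨z1, hz1, mem_vsupp.1 hi⟩, ?_, ?_⟩
        · rw [hNi i hi]; exact h3 z1 hz1
        · intro j hj
          rw [hNi i hi] at hj
          rw [hNi i hi, hNi j hj]
      have hrankK : 1 ≤ finrank (ZMod 2) (span (ZMod 2) (K : Set (ι → ZMod 2))) := by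
        have hz1ne : z1 ≠ 0 := by
          intro h
          have := h3 z1 hz1
          rw [h] at this
          simp [vsupp] at this
        have h1 : finrank (ZMod 2) (span (ZMod 2) ({z1} : Set (ι → ZMod 2))) = 1 :=
          finrank_span_singleton hz1ne
        rw [← h1]
        exact Submodule.finrank_mono (Submodule.span_mono (by simpa using hz1K))
      refine ⟨a' + 1, b', ?_, ?_, ?_⟩
      · omega
      · rw [hSScard, hSSK, h3 z1 hz1]; omega
      · have hsubU : plains Z' ∪ vsupp z1 ⊆ plains Z := by
          apply Finset.union_subset hplainT
          intro i hi
          exact Finset.mem_filter.2 ⟨Finset.mem_univ i, hplainK i hi⟩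
        have hdisj2 : Disjoint (plains Z') (vsupp z1) := by
          refine Finset.disjoint_left.2 (fun i hi hi2 => ?_)
          exact Finset.disjoint_left.1 hdisj (hSSK ▸ hi2) (plains_subset_SS Z' hi)
        have := Finset.card_le_card hsubU
        rw [Finset.card_union_of_disjoint hdisj2, h3 z1 hz1] at this
        omega
    · -- big component
      push_neg at hall
      obtain ⟨z2, hz2K, hz2ne⟩ := hall
      have hconnK0 : ∀ z, Relation.ReflTransGen (R Z) z1 z →
          Relation.ReflTransGen (R K) z1 z := by
        intro z hz
        induction hz with
        | refl => exact Relation.ReflTransGen.refl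
        | @tail b c hb hstep ihc =>
          have hbK : b ∈ K := Finset.mem_filter.2 ⟨hstep.1, hb⟩
          have hcK : c ∈ K := Finset.mem_filter.2 ⟨hstep.2.1, hb.tail hstep⟩
          exact ihc.tail ⟨hbK, hcK, hstep.2.2⟩
      have hconnK : ∀ z ∈ K, Relation.ReflTransGen (R K) z1 z := fun z hz =>
        hconnK0 z (Finset.mem_filter.1 hz).2
      obtain ⟨t, htrank, htcard, ht2⟩ := greedy K h3K z1 hz1K hconnK
      have ht2' : 2 ≤ t := ht2 z2 hz2K hz2ne
      refine ⟨a', b' + t, by omega, ?_,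
        le_trans hplain' (Finset.card_le_card hplainT)⟩
      rw [hSScard]; omega

end ML

section Pairs
variable {ι : Type*} [Fintype ι] [DecidableEq ι]

/-- the weight-2 indicator vector attached to a plain coordinate -/
def sfun (Z : Finset (ι → ZMod 2)) (i : ι) : ι → ZMod 2 :=
  fun j => if j ∈ NN Z i \ {i} then 1 else 0

lemma vsupp_sfun (Z : Finset (ι → ZMod 2)) (i : ι) :
    vsupp (sfun Z i) = NN Z i \ {i} := by
  ext j
  simp only [mem_vsupp, sfun]
  by_cases h : j ∈ NN Z i \ {i} <;> simp [h]

lemma mem_NN_self {Z : Finset (ι → ZMod 2)} {i : ι} (hi : i ∈ SS Z) : i ∈ NN Z i := by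
  obtain ⟨z, hz, h0⟩ := mem_SS.1 hi
  exact mem_NN.2 ⟨z, hz, h0, h0⟩

lemma card_sfun {Z : Finset (ι → ZMod 2)} {i : ι} (hp : plain Z i) :
    (vsupp (sfun Z i)).card = 2 := by
  rw [vsupp_sfun, Finset.card_sdiff_of_subset (Finset.singleton_subset_iff.2 (mem_NN_self hp.1)),
    hp.2.1, Finset.card_singleton]

lemma sfun_ne_zero {Z : Finset (ι → ZMod 2)} {i : ι} (hp : plain Z i) :
    sfun Z i ≠ 0 := by
  intro h
  have := card_sfun hp
  rw [h] at this
  simp [vsupp] at this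

lemma vsupp_subset_NN {Z : Finset (ι → ZMod 2)} {y : ι → ZMod 2} (hy : y ∈ Z)
    {j : ι} (hj : y j ≠ 0) : vsupp y ⊆ NN Z j :=
  fun k hk => mem_NN.2 ⟨y, hy, hj, mem_vsupp.1 hk⟩

/-- for a plain coordinate, any member of `Z` touching `NN Z i` has support
exactly `NN Z i` -/
lemma plain_touch_eq {Z : Finset (ι → ZMod 2)} (h3 : ∀ z ∈ Z, (vsupp z).card = 3)
    {i : ι} (hp : plain Z i) {y : ι → ZMod 2} (hy : y ∈ Z)
    {j : ι} (hj : j ∈ NN Z i) (hyj : y j ≠ 0) : vsupp y = NN Z i := by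
  have h1 : vsupp y ⊆ NN Z j := vsupp_subset_NN hy hyj
  rw [hp.2.2 j hj] at h1
  exact Finset.eq_of_subset_of_card_le h1 (by rw [h3 y hy, hp.2.1])

lemma plain_pair_orth {Z : Finset (ι → ZMod 2)} (h3 : ∀ z ∈ Z, (vsupp z).card = 3)
    {i : ι} (hp : plain Z i) {y : ι → ZMod 2} (hy : y ∈ Z) :
    ∑ j, y j * (sfun Z i) j = 0 := by
  have hsum : ∑ j, y j * (sfun Z i) j = ∑ j ∈ NN Z i \ {i}, y j := by
    rw [← Finset.univ_inter (NN Z i \ {i}), ← Finset.sum_ite_mem]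
    exact Finset.sum_congr rfl (fun j _ => by
      by_cases h : j ∈ NN Z i \ {i} <;> simp [sfun, h])
  have hPcard : (NN Z i \ {i}).card = 2 := by
    rw [Finset.card_sdiff_of_subset (Finset.singleton_subset_iff.2 (mem_NN_self hp.1)), hp.2.1, Finset.card_singleton]
  obtain ⟨α, β, hab, hP⟩ := Finset.card_eq_two.1 hPcard
  rw [hsum, hP, Finset.sum_pair hab]
  by_cases hov : ∃ j ∈ NN Z i \ {i}, y j ≠ 0
  · obtain ⟨j, hj, hyj⟩ := hov
    have hveq : vsupp y = NN Z i := plain_touch_eq h3 hp hy (Finset.mem_sdiff.1 hj).1 hyj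
    have hα : y α ≠ 0 := by
      have : α ∈ vsupp y := by
        rw [hveq]
        exact (Finset.mem_sdiff.1 (hP ▸ Finset.mem_insert_self α {β})).1
      exact mem_vsupp.1 this
    have hβ : y β ≠ 0 := by
      have : β ∈ vsupp y := by
        rw [hveq]
        exact (Finset.mem_sdiff.1 (hP ▸ Finset.mem_insert_of_mem (Finset.mem_singleton_self β))).1
      exact mem_vsupp.1 this
    have h1 : ∀ u : ZMod 2, u ≠ 0 → u = 1 := by decide
    rw [h1 _ hα, h1 _ hβ]
    decide
  · push_neg at hov
    rw [hov α (hP ▸ Finset.mem_insert_self α {β}),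
      hov β (hP ▸ Finset.mem_insert_of_mem (Finset.mem_singleton_self β)), add_zero]

lemma plain_NN_eq_or_disjoint {Z : Finset (ι → ZMod 2)} {i i' : ι}
    (hp : plain Z i) (hp' : plain Z i') :
    NN Z i = NN Z i' ∨ Disjoint (NN Z i) (NN Z i') := by
  by_cases h : Disjoint (NN Z i) (NN Z i')
  · exact Or.inr h
  · left
    obtain ⟨k, hk, hk'⟩ := Finset.not_disjoint_iff.1 h
    rw [← hp.2.2 k hk, hp'.2.2 k hk']

lemma sfun_inj {Z : Finset (ι → ZMod 2)} {i i' : ι}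
    (hp : plain Z i) (hp' : plain Z i') (h : sfun Z i = sfun Z i') : i = i' := by
  have hPP : NN Z i \ {i} = NN Z i' \ {i'} := by
    rw [← vsupp_sfun, ← vsupp_sfun, h]
  rcases plain_NN_eq_or_disjoint hp hp' with heq | hdisj
  · by_contra hne
    have hi : i ∈ NN Z i' \ {i'} := by
      rw [Finset.mem_sdiff, ← heq]
      exact ⟨mem_NN_self hp.1, by simpa using hne⟩
    rw [← hPP, Finset.mem_sdiff] at hi
    exact (hi.2 (Finset.mem_singleton_self i)).elim
  · exfalso
    have hne : (NN Z i \ {i}).Nonempty := by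
      have : (NN Z i \ {i}).card = 2 := by
        rw [Finset.card_sdiff_of_subset (Finset.singleton_subset_iff.2 (mem_NN_self hp.1)), hp.2.1, Finset.card_singleton]
      rw [← Finset.card_pos, this]; omega
    obtain ⟨x, hx⟩ := hne
    have hx' : x ∈ NN Z i' \ {i'} := hPP ▸ hx
    exact Finset.disjoint_left.1 hdisj (Finset.mem_sdiff.1 hx).1 (Finset.mem_sdiff.1 hx').1

end Pairs

section Bform
variable {ι : Type*} [Fintype ι] [DecidableEq ι]

/-- the standard dot-product bilinear form -/
def bform : LinearMap.BilinForm (ZMod 2) (ι → ZMod 2) :=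
  LinearMap.mk₂ (ZMod 2) (fun x y => ∑ j, x j * y j)
    (fun x x' y => by simp [add_mul, Finset.sum_add_distrib])
    (fun c x y => by simp [Finset.mul_sum, mul_assoc])
    (fun x y y' => by simp [mul_add, Finset.sum_add_distrib])
    (fun c x y => by
      simp only [Pi.smul_apply, smul_eq_mul, Finset.mul_sum]
      exact Finset.sum_congr rfl (fun j _ => by ring))

lemma bform_apply (x y : ι → ZMod 2) : bform x y = ∑ j, x j * y j := rfl

lemma bform_comm (x y : ι → ZMod 2) : bform x y = bform y x := by
  rw [bform_apply, bform_apply]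
  exact Finset.sum_congr rfl (fun j _ => mul_comm _ _)

lemma bform_isRefl : (bform (ι := ι)).IsRefl := fun x y h => by
  rw [bform_comm]; exact h

lemma bform_nondeg : (bform (ι := ι)).Nondegenerate := by
  refine ⟨fun x hx => ?_, fun x hx => ?_⟩ <;> funext j
  · have := hx (Pi.single j 1)
    rw [bform_apply] at this
    simpa [Pi.single_apply, Finset.sum_ite_eq'] using this
  · have := hx (Pi.single j 1)
    rw [bform_apply] at this
    simpa [Pi.single_apply, Finset.sum_ite_eq, Finset.sum_ite_eq'] using this

lemma mem_orth_span {Y : Finset (ι → ZMod 2)} {v : ι → ZMod 2}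
    (h : ∀ y ∈ Y, bform y v = 0) :
    v ∈ bform.orthogonal (span (ZMod 2) (Y : Set (ι → ZMod 2))) := by
  rw [LinearMap.BilinForm.mem_orthogonal_iff]
  intro w hw
  induction hw using Submodule.span_induction with
  | mem y hy => exact h y hy
  | zero => simp [LinearMap.BilinForm.IsOrtho]
  | add u u' _ _ hu hu' =>
    rw [map_add, LinearMap.add_apply, hu, hu', add_zero]
  | smul c u _ hu =>
    rw [map_smul, LinearMap.smul_apply, hu, smul_zero]

end Bform

lemma thirty_mul_le (m : ℕ) : 10 ≤ m → 30 * m ≤ 2 ^ m := by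
  induction m with
  | zero => omega
  | succ k ih =>
    intro h
    by_cases hk : 10 ≤ k
    · have h1 := ih hk
      have h2 : 2 ^ (k + 1) = 2 * 2 ^ k := by ring
      omega
    · have hk9 : k = 9 := by omega
      subst hk9; norm_num

end LRC

/-- Dimension bound for binary linear codes of length `2^m - 1`, minimum
distance `6` and locality `2` (no disjoint-repair-group assumption), for even
`m > 8`: `k ≤ (2/3)(2^m - 1) - m`. -/
theorem dimension_bound_d6_locality2
    (m : ℕ) (hm : Even m) (hm8 : 8 < m)
    (C : Submodule (ZMod 2) (Fin (2 ^ m - 1) → ZMod 2))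
    -- minimum distance is `6`
    (hd : ∀ c ∈ C, c ≠ 0 → 6 ≤ hammingNorm c)
    (hd' : ∃ c ∈ C, c ≠ 0 ∧ hammingNorm c = 6)
    -- locality `2`: every coordinate lies in the support of a weight-3
    -- dual codeword
    (hloc : ∀ i : Fin (2 ^ m - 1), ∃ y : Fin (2 ^ m - 1) → ZMod 2,
        (∀ x ∈ C, ∑ j, x j * y j = 0) ∧ hammingNorm y = 3 ∧ y i ≠ 0) :
    Module.finrank (ZMod 2) C ≤ 2 * (2 ^ m - 1) / 3 - m := by
  classical
  clear hd'
  -- numerics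
  obtain ⟨c0, hc0⟩ := hm
  have hm10 : 10 ≤ m := by omega
  have h2m1 : 1 ≤ 2 ^ m := Nat.one_le_two_pow
  have hmod : (2 ^ m - 1) % 3 = 0 := by
    have hpow : 2 ^ m = 4 ^ c0 := by
      rw [hc0, pow_add, show (4 : ℕ) = 2 * 2 by norm_num, mul_pow]
    have h4 : 4 ^ c0 % 3 = 1 := by
      rw [Nat.pow_mod]; norm_num
    omega
  have h30 : 30 * m ≤ 2 ^ m := LRC.thirty_mul_le m hm10
  have hp2 : 2 ^ m = 2 * 2 ^ (m - 1) := by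
    conv_lhs => rw [show m = (m - 1) + 1 by omega]
    ring
  -- the finite set of weight-3 dual codewords
  set Y : Finset (Fin (2 ^ m - 1) → ZMod 2) := Finset.univ.filter
    (fun y => hammingNorm y = 3 ∧ ∀ x ∈ C, ∑ j, x j * y j = 0) with hY
  have hYmem : ∀ y, y ∈ Y ↔ (hammingNorm y = 3 ∧ ∀ x ∈ C, ∑ j, x j * y j = 0) := by
    intro y; simp [hY]
  have h3Y : ∀ y ∈ Y, (LRC.vsupp y).card = 3 := fun y hy => by
    rw [← LRC.hammingNorm_eq]
    exact ((hYmem y).1 hy).1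
  have hSSY : LRC.SS Y = Finset.univ := by
    apply Finset.eq_univ_iff_forall.2
    intro i
    obtain ⟨y, horth, hnorm, hyi⟩ := hloc i
    exact LRC.mem_SS.2 ⟨y, (hYmem y).2 ⟨hnorm, horth⟩, hyi⟩
  obtain ⟨a, b, hab, hcount, hplainML⟩ := LRC.ML Y h3Y
  rw [hSSY] at hcount
  have hcount' : 2 * (2 ^ m - 1) ≤ 6 * a + 5 * b := by
    rwa [Finset.card_univ, Fintype.card_fin] at hcount
  -- the orthogonal complement of the span of Y
  set W := Submodule.span (ZMod 2) (Y : Set (Fin (2 ^ m - 1) → ZMod 2)) with hW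
  set r := Module.finrank (ZMod 2) W with hr
  set E := LRC.bform.orthogonal W with hE
  have hCE : C ≤ E := by
    intro x hx
    apply LRC.mem_orth_span
    intro y hy
    rw [LRC.bform_apply, ← ((hYmem y).1 hy).2 x hx]
    exact Finset.sum_congr rfl (fun j _ => mul_comm _ _)
  have hambient : Module.finrank (ZMod 2) (Fin (2 ^ m - 1) → ZMod 2) = 2 ^ m - 1 := by
    rw [Module.finrank_pi, Fintype.card_fin]
  have hdim : r + Module.finrank (ZMod 2) E = 2 ^ m - 1 := by
    have h1 := LinearMap.BilinForm.finrank_orthogonal LRC.bform_nondeg W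
    have h3 : r ≤ 2 ^ m - 1 := hambient ▸ W.finrank_le
    rw [hE, h1, hambient, ← hr]
    omega
  -- the quotient map
  set f : E →ₗ[ZMod 2] ((Fin (2 ^ m - 1) → ZMod 2) ⧸ C) := C.mkQ.comp E.subtype with hf
  have hkerrank : Module.finrank (ZMod 2) (LinearMap.ker f) = Module.finrank (ZMod 2) C := by
    have hker : LinearMap.ker f = C.comap E.subtype := by
      rw [hf, LinearMap.ker_comp, Submodule.ker_mkQ]
    rw [hker]
    exact LinearEquiv.finrank_eq (Submodule.comapSubtypeEquivOfLe hCE)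
  set t := Module.finrank (ZMod 2) (LinearMap.range f) with ht
  have hsplitE : t + Module.finrank (ZMod 2) C = Module.finrank (ZMod 2) E := by
    rw [← hkerrank, ht]
    exact LinearMap.finrank_range_add_finrank_ker f
  -- cosets of the plain pair vectors
  haveI : Finite ((Fin (2 ^ m - 1) → ZMod 2) ⧸ C) :=
    Finite.of_surjective _ (Submodule.mkQ_surjective C)
  haveI : Fintype ((Fin (2 ^ m - 1) → ZMod 2) ⧸ C) := Fintype.ofFinite _
  set g : Fin (2 ^ m - 1) → ((Fin (2 ^ m - 1) → ZMod 2) ⧸ C) :=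
    fun i => C.mkQ (LRC.sfun Y i) with hg
  have hplain_of : ∀ i ∈ LRC.plains Y, LRC.plain Y i := fun i hi => (Finset.mem_filter.1 hi).2
  have hg0 : ∀ i ∈ LRC.plains Y, g i ≠ 0 := by
    intro i hi h
    have hiC : LRC.sfun Y i ∈ C := (Submodule.Quotient.mk_eq_zero C).1 h
    have h6 := hd _ hiC (LRC.sfun_ne_zero (hplain_of i hi))
    rw [LRC.hammingNorm_eq, LRC.card_sfun (hplain_of i hi)] at h6
    omega
  have hginj : Set.InjOn g (LRC.plains Y) := by
    intro i hi i' hi' hgg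
    by_cases hss : LRC.sfun Y i = LRC.sfun Y i'
    · exact LRC.sfun_inj (hplain_of i hi) (hplain_of i' hi') hss
    · exfalso
      have hCmem : LRC.sfun Y i - LRC.sfun Y i' ∈ C := (Submodule.Quotient.eq C).1 hgg
      have h6 := hd _ hCmem (sub_ne_zero.2 hss)
      have h4 : hammingNorm (LRC.sfun Y i - LRC.sfun Y i') ≤ 4 := by
        rw [show LRC.sfun Y i - LRC.sfun Y i' = -(LRC.sfun Y i') + LRC.sfun Y i by abel,
          ← hammingDist_eq_hammingNorm, hammingDist_comm]
        have htr := hammingDist_triangle (LRC.sfun Y i) 0 (LRC.sfun Y i')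
        rw [hammingDist_zero_right, hammingDist_comm 0, hammingDist_zero_right,
          LRC.hammingNorm_eq, LRC.hammingNorm_eq, LRC.card_sfun (hplain_of i hi),
          LRC.card_sfun (hplain_of i' hi')] at htr
        omega
      omega
  have hgrange : ∀ i ∈ LRC.plains Y, g i ∈ LinearMap.range f := by
    intro i hi
    have hsE : LRC.sfun Y i ∈ E := by
      apply LRC.mem_orth_span
      intro y hy
      rw [LRC.bform_apply]
      exact LRC.plain_pair_orth h3Y (hplain_of i hi) hy
    exact ⟨⟨_, hsE⟩, rfl⟩
  have hcard2 : (LRC.plains Y).card + 1 ≤ 2 ^ t := by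
    set F : Finset ((Fin (2 ^ m - 1) → ZMod 2) ⧸ C) :=
      insert 0 ((LRC.plains Y).image g) with hF
    have hFcard : F.card = (LRC.plains Y).card + 1 := by
      rw [hF, Finset.card_insert_of_notMem, Finset.card_image_of_injOn hginj]
      intro h0
      obtain ⟨i, hi, hgi⟩ := Finset.mem_image.1 h0
      exact hg0 i hi hgi
    have hFsub : F ⊆ Set.toFinset ((LinearMap.range f : Submodule (ZMod 2) _) : Set _) := by
      intro q hq
      rw [Set.mem_toFinset]
      rcases Finset.mem_insert.1 hq with rfl | hq
      · exact Submodule.zero_mem _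
      · obtain ⟨i, hi, rfl⟩ := Finset.mem_image.1 hq
        exact hgrange i hi
    have h1 := Finset.card_le_card hFsub
    rw [hFcard, Set.toFinset_card] at h1
    have h2 : Fintype.card (LinearMap.range f) = 2 ^ t := by
      have h3 := card_eq_pow_finrank (K := ZMod 2) (V := LinearMap.range f)
      rwa [ZMod.card 2] at h3
    have h3' : Fintype.card
        ((LinearMap.range f : Submodule (ZMod 2) ((Fin (2 ^ m - 1) → ZMod 2) ⧸ C)) :
          Set ((Fin (2 ^ m - 1) → ZMod 2) ⧸ C)) = Fintype.card (LinearMap.range f) :=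
      Fintype.card_congr (Equiv.refl _)
    omega
  have hclog : Nat.clog 2 ((LRC.plains Y).card + 1) ≤ t :=
    (Nat.clog_le_iff_le_pow one_lt_two).2 hcard2
  -- final arithmetic
  have hkey : (2 ^ m - 1) / 3 + m ≤ r + t := by
    rcases le_or_gt (2 ^ (m - 1)) (3 * a) with hcase | hcase
    · -- many plain coordinates: t is at least m
      have hlt : 2 ^ (m - 1) < 3 * a + 1 := by omega
      have h1 : m - 1 < Nat.clog 2 (3 * a + 1) :=
        (Nat.lt_clog_iff_pow_lt one_lt_two).2 hlt
      have h2 : Nat.clog 2 (3 * a + 1) ≤ Nat.clog 2 ((LRC.plains Y).card + 1) :=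
        Nat.clog_mono_right 2 (by omega)
      omega
    · -- few plain coordinates: the rank surplus is large
      omega
  have hkeq : Module.finrank (ZMod 2) C + t + r = 2 ^ m - 1 := by omega
  omega
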